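/- Let A be a finite abelian group, C a cyclic group of order d, and b : A × A → C an alternating biadditive pairing (b(x, y+z) = b(x,y)b(x,z), b(x+y, z) = b(x,z)b(y,z), and b(x,x) = 1 for all x). Then there exists a central extension 1 → C → E → A → 1 whose commutator pairing equals b, i.e. for all x, y ∈ A and any lifts x̃, ỹ ∈ E one has x̃ỹx̃⁻¹ỹ⁻¹ = b(x,y). -/
import Mathlib

private lemma nsmul_eq_of_modEq' {M : Type*} [AddCommGroup M] {x : M} {n : ℕ}
    (h : n • x = 0) {k l : ℕ} (hkl : k ≡ l [MOD n]) : k • x = l • x := by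
  have key : ∀ k : ℕ, k • x = (k % n) • x := by
    intro k
    conv_lhs => rw [← Nat.div_add_mod k n]
    rw [add_smul, mul_comm, mul_smul, h, smul_zero, zero_add]
  rw [key k, key l, hkl]

private lemma core_antisym {A : Type*} {M : Type*} {ι : Type*}
    [AddCommGroup A] [AddCommGroup M] [Fintype ι] [LinearOrder ι]
    (B : A →+ A →+ M) (halt : ∀ x, B x x = 0)
    (n : ι → ℕ) (e : ι → A) (v : A → ι → ℕ)
    (hme : ∀ i, n i • e i = 0)
    (hv : ∀ x, x = ∑ i, v x i • e i)
    (hvadd : ∀ x y i, v (x + y) i ≡ v x i + v y i [MOD n i]) :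
    ∃ F : A →+ A →+ M, ∀ x y : A, F x y - F y x = B x y := by
  classical
  have hanti : ∀ x y : A, B x y + B y x = 0 := by
    intro x y
    have h := halt (x + y)
    simp only [map_add, AddMonoidHom.add_apply, halt, zero_add, add_zero] at h
    rw [add_comm]; exact h
  have hm1 : ∀ i j, n i • B (e i) (e j) = 0 := by
    intro i j
    have h : B.flip (e j) (n i • e i) = n i • B (e i) (e j) :=
      map_nsmul (B.flip (e j)) (n i) (e i)
    rw [← h, hme, map_zero]
  have hm2 : ∀ i j, n j • B (e i) (e j) = 0 := by
    intro i j
    have h : B (e i) (n j • e j) = n j • B (e i) (e j) :=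
      map_nsmul (B (e i)) (n j) (e j)
    rw [← h, hme, map_zero]
  have hB : ∀ x y : A, B x y = ∑ i, ∑ j, (v x i * v y j) • B (e i) (e j) := by
    intro x y
    calc B x y = ∑ i, v x i • B (e i) y := by
          conv_lhs => rw [hv x, ← AddMonoidHom.flip_apply]
          rw [map_sum]
          simp only [map_nsmul, AddMonoidHom.flip_apply]
      _ = ∑ i, ∑ j, (v x i * v y j) • B (e i) (e j) := by
          refine Finset.sum_congr rfl fun i _ => ?_
          conv_lhs => rw [hv y]
          rw [map_sum, Finset.smul_sum]
          refine Finset.sum_congr rfl fun j _ => ?_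
          rw [map_nsmul, smul_smul]
  refine ⟨AddMonoidHom.mk' (fun x => AddMonoidHom.mk'
      (fun y => ∑ i, ∑ j, if i < j then (v x i * v y j) • B (e i) (e j) else 0)
      (fun y z => ?_)) (fun x x' => ?_), fun x y => ?_⟩
  · -- additivity in second variable
    rw [← Finset.sum_add_distrib]
    refine Finset.sum_congr rfl fun i _ => ?_
    rw [← Finset.sum_add_distrib]
    refine Finset.sum_congr rfl fun j _ => ?_
    by_cases h : i < j
    · simp only [if_pos h]
      rw [nsmul_eq_of_modEq' (hm2 i j) ((hvadd y z j).mul_left (v x i)),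
        mul_add, add_smul]
    · simp [h]
  · -- additivity in first variable
    ext z
    simp only [AddMonoidHom.add_apply, AddMonoidHom.mk'_apply]
    rw [← Finset.sum_add_distrib]
    refine Finset.sum_congr rfl fun i _ => ?_
    rw [← Finset.sum_add_distrib]
    refine Finset.sum_congr rfl fun j _ => ?_
    by_cases h : i < j
    · simp only [if_pos h]
      rw [nsmul_eq_of_modEq' (hm1 i j) ((hvadd x x' i).mul_right (v z j)),
        add_mul, add_smul]
    · simp [h]
  · -- antisymmetrization
    show (∑ i, ∑ j, if i < j then (v x i * v y j) • B (e i) (e j) else 0)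
        - (∑ i, ∑ j, if i < j then (v y i * v x j) • B (e i) (e j) else 0) = B x y
    rw [show (∑ i, ∑ j, if i < j then (v y i * v x j) • B (e i) (e j) else 0)
        = ∑ i, ∑ j, if j < i then (v y j * v x i) • B (e j) (e i) else 0 from
        Finset.sum_comm]
    rw [hB, ← Finset.sum_sub_distrib]
    refine Finset.sum_congr rfl fun i _ => ?_
    rw [← Finset.sum_sub_distrib]
    refine Finset.sum_congr rfl fun j _ => ?_
    rcases lt_trichotomy i j with h | h | h
    · rw [if_pos h, if_neg (asymm h), sub_zero]
    · subst h
      simp [halt]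
    · rw [if_neg (asymm h), if_pos h, zero_sub,
        show B (e j) (e i) = -B (e i) (e j) from
          eq_neg_of_add_eq_zero_left (hanti (e j) (e i)),
        smul_neg, neg_neg, Nat.mul_comm]

private lemma exists_antisymmetrization {A : Type*} {M : Type*}
    [AddCommGroup A] [Finite A] [AddCommGroup M]
    (B : A →+ A →+ M) (halt : ∀ x, B x x = 0) :
    ∃ F : A →+ A →+ M, ∀ x y : A, F x y - F y x = B x y := by
  classical
  obtain ⟨ι, hι, n, hn, ⟨φ⟩⟩ := AddCommGroup.equiv_directSum_zmod_of_finite' A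
  haveI := hι
  haveI : ∀ i, NeZero (n i) := fun i => ⟨by have := hn i; omega⟩
  letI : LinearOrder ι := LinearOrder.lift' (Fintype.equivFin ι) (Fintype.equivFin ι).injective
  refine core_antisym B halt n (fun i => φ.symm (DirectSum.of (fun j => ZMod (n j)) i 1))
    (fun x i => (φ x i).val) ?_ ?_ ?_
  · intro i
    have h1 : n i • DirectSum.of (fun j => ZMod (n j)) i 1 = 0 := by
      rw [← map_nsmul (DirectSum.of (fun j => ZMod (n j)) i) (n i) 1]
      have : (n i) • (1 : ZMod (n i)) = 0 := by
        simp [nsmul_eq_mul]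
      rw [this, map_zero]
    rw [← map_nsmul φ.symm (n i), h1, map_zero]
  · intro x
    apply φ.injective
    conv_lhs => rw [← DirectSum.sum_univ_of (φ x)]
    rw [map_sum]
    refine Finset.sum_congr rfl fun i _ => ?_
    rw [map_nsmul φ, φ.apply_symm_apply,
      ← map_nsmul (DirectSum.of (fun j => ZMod (n j)) i) ((φ x i).val) 1]
    congr 1
    simp [nsmul_eq_mul, ZMod.natCast_val, ZMod.cast_id]
  · intro x y i
    show ((φ (x + y)) i).val ≡ ((φ x) i).val + ((φ y) i).val [MOD n i]
    rw [map_add, DirectSum.add_apply, ZMod.val_add]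
    exact Nat.mod_modEq _ _

/-- **Existence of central extensions with prescribed commutator pairing.**
Let `A` be a finite abelian group, `C` a cyclic group of order `d`, and
`b : A × A → C` an alternating biadditive pairing.  Then there exists a central extension
`1 → C → E → A → 1` whose commutator pairing equals `b`: for all lifts `x̃, ỹ` of
`x, y ∈ A` one has `x̃ỹx̃⁻¹ỹ⁻¹ = b(x, y)`. -/
theorem exists_central_extension_with_commutator_pairing
    (A : Type u) [AddCommGroup A] [Finite A]
    (C : Type v) [CommGroup C] [IsCyclic C]
    (d : ℕ) (hd : 0 < d) (hC : Nat.card C = d)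
    (b : A → A → C)
    (hb₁ : ∀ x y z : A, b x (y + z) = b x y * b x z)
    (hb₂ : ∀ x y z : A, b (x + y) z = b x z * b y z)
    (halt : ∀ x : A, b x x = 1) :
    ∃ (E : Type (max u v)) (_ : Group E) (ι : C →* E) (p : E → A),
      Function.Injective ι ∧
      (∀ c : C, ι c ∈ Subgroup.center E) ∧
      (∀ x y : E, p (x * y) = p x + p y) ∧
      Function.Surjective p ∧
      (∀ e : E, p e = 0 ↔ e ∈ ι.range) ∧
      (∀ x y : E, x * y * x⁻¹ * y⁻¹ = ι (b (p x) (p y))) := by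
  classical
  -- the pairing as a biadditive map into `Additive C`
  let B : A →+ A →+ Additive C :=
    AddMonoidHom.mk' (fun x => AddMonoidHom.mk' (fun y => Additive.ofMul (b x y))
      (fun y z => by simp [hb₁ x y z, ofMul_mul]))
      (fun x x' => by ext z; simp [hb₂ x x' z, ofMul_mul])
  obtain ⟨F, hF⟩ := exists_antisymmetrization B (fun x => by
    show Additive.ofMul (b x x) = 0
    rw [halt x, ofMul_one])
  have hF' : ∀ x y : A, F x y - F y x = Additive.ofMul (b x y) := hF
  -- the group structure on `C × A`
  letI : One (C × A) := ⟨(1, 0)⟩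
  letI : Mul (C × A) := ⟨fun x y => (x.1 * y.1 * (F x.2 y.2).toMul, x.2 + y.2)⟩
  letI : Inv (C × A) := ⟨fun x => (x.1⁻¹ * (F x.2 x.2).toMul, -x.2)⟩
  have hmul : ∀ x y : C × A, x * y = (x.1 * y.1 * (F x.2 y.2).toMul, x.2 + y.2) :=
    fun _ _ => rfl
  have hone : (1 : C × A) = (1, 0) := rfl
  have hinv : ∀ x : C × A, x⁻¹ = (x.1⁻¹ * (F x.2 x.2).toMul, -x.2) := fun _ => rfl
  letI grp : Group (C × A) := Group.ofLeftAxioms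
    (by
      intro x y z
      simp only [hmul, Prod.mk.injEq]
      refine ⟨?_, add_assoc _ _ _⟩
      simp only [map_add, AddMonoidHom.add_apply, toMul_add]
      refine Additive.ofMul.injective ?_
      simp only [ofMul_mul, ofMul_toMul]
      abel)
    (by
      intro x
      simp only [hmul, hone, map_zero, AddMonoidHom.zero_apply, toMul_zero, mul_one,
        one_mul, zero_add])
    (by
      intro x
      simp only [hmul, hinv, hone, Prod.mk.injEq, neg_add_cancel, map_neg,
        AddMonoidHom.neg_apply, toMul_neg]
      refine ⟨?_, trivial⟩
      refine Additive.ofMul.injective ?_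
      simp only [ofMul_mul, ofMul_inv, ofMul_toMul, ofMul_one]
      abel)
  let ι0 : C →* C × A := MonoidHom.mk' (fun c => (c, 0)) (fun c c' => by
    simp only [hmul, Prod.mk.injEq, map_zero, AddMonoidHom.zero_apply, toMul_zero,
      mul_one, add_zero])
  have hι0 : ∀ c : C, ι0 c = (c, 0) := fun _ => rfl
  refine ⟨C × A, grp, ι0, Prod.snd, ?_, ?_, ?_, ?_, ?_, ?_⟩
  · intro c c' h
    exact congrArg Prod.fst h
  · intro c
    rw [Subgroup.mem_center_iff]
    intro g
    simp only [hι0, hmul, map_zero, AddMonoidHom.zero_apply, toMul_zero, mul_one,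
      add_zero, zero_add, Prod.mk.injEq]
    exact ⟨mul_comm _ _, trivial⟩
  · intro x y
    rfl
  · intro a
    exact ⟨(1, a), rfl⟩
  · intro e
    constructor
    · intro h
      exact ⟨e.1, by rw [hι0]; exact Prod.ext rfl h.symm⟩
    · rintro ⟨c, rfl⟩
      rfl
  · intro x y
    show x * y * x⁻¹ * y⁻¹ = (b x.2 y.2, 0)
    simp only [hmul, hinv]
    refine Prod.ext ?_ (by abel)
    show _ = b x.2 y.2
    refine Additive.ofMul.injective ?_
    simp only [map_add, map_neg, AddMonoidHom.add_apply, AddMonoidHom.neg_apply,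
      toMul_add, toMul_neg, ofMul_mul, ofMul_inv, ofMul_toMul]
    rw [show Additive.ofMul (b x.2 y.2) = F x.2 y.2 - F y.2 x.2 from (hF' _ _).symm]
    abel
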